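/- No quantile mechanism over the buyer's distribution achieves a constant fraction of the optimal welfare: for every ε > 0 and every Borel probability measure Q on [0,1], there exists an instance I = (F_S, F_B) of bilateral trade with F_B atomless and 0 < OPT(I) < ∞ such that ∫ W(I, F_B^{-1}(x)) dQ(x) ≤ ε · OPT(I). -/

import Mathlib

open MeasureTheory

/-- Expected welfare of the fixed price `p` on the bilateral-trade instance `(μ, ν)`. -/
noncomputable def welfare (μ ν : Measure ℝ) (p : ℝ) : ℝ :=
  ∫ z : ℝ × ℝ, (z.1 + if z.1 ≤ p ∧ p ≤ z.2 then z.2 - z.1 else 0) ∂(μ.prod ν)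

/-- Optimal welfare `OPT(I) = E[max(S,B)]`. -/
noncomputable def optWelfare (μ ν : Measure ℝ) : ℝ :=
  ∫ z : ℝ × ℝ, max z.1 z.2 ∂(μ.prod ν)

/-- The quantile function of a measure `F` on `ℝ`:
`F⁻¹(x) = inf { y | F((−∞,y]) ≥ x }`. -/
noncomputable def quantileFn (F : Measure ℝ) (x : ℝ) : ℝ :=
  sInf { y : ℝ | x ≤ (F (Set.Iic y)).toReal }

namespace Stmt10Aux

open Set

/-- The buyer distribution: mass `1-δ` uniform on `(0,1]`, mass `δ` uniform on `(M, M+1]`. -/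
noncomputable def nu (δ M : ℝ) : Measure ℝ :=
  ENNReal.ofReal (1 - δ) • (volume.restrict (Ioc (0:ℝ) 1)) +
    ENNReal.ofReal δ • (volume.restrict (Ioc M (M+1)))

variable {δ M : ℝ}

lemma nu_apply {s : Set ℝ} (hs : MeasurableSet s) :
    nu δ M s = ENNReal.ofReal (1 - δ) * volume (s ∩ Ioc (0:ℝ) 1)
      + ENNReal.ofReal δ * volume (s ∩ Ioc M (M+1)) := by
  simp [nu, Measure.add_apply, Measure.smul_apply, Measure.restrict_apply hs, smul_eq_mul]

lemma nu_prob (hδ0 : 0 ≤ δ) (hδ1 : δ ≤ 1) : IsProbabilityMeasure (nu δ M) := by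
  constructor
  rw [nu_apply MeasurableSet.univ]
  simp only [Set.univ_inter]
  rw [Real.volume_Ioc, Real.volume_Ioc]
  norm_num
  rw [← ENNReal.ofReal_add (by linarith) hδ0]
  norm_num

lemma nu_Iio (hM : 0 ≤ M) : nu δ M (Iio 0) = 0 := by
  rw [nu_apply measurableSet_Iio]
  have h1 : Iio (0:ℝ) ∩ Ioc 0 1 = ∅ := by
    ext b; simp only [mem_inter_iff, mem_Iio, mem_Ioc, mem_empty_iff_false, iff_false]
    rintro ⟨h1, h2, h3⟩; linarith
  have h2 : Iio (0:ℝ) ∩ Ioc M (M+1) = ∅ := by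
    ext b; simp only [mem_inter_iff, mem_Iio, mem_Ioc, mem_empty_iff_false, iff_false]
    rintro ⟨h1, h2, h3⟩; linarith
  rw [h1, h2]; simp

lemma nu_singleton (x : ℝ) : nu δ M {x} = 0 := by
  rw [nu_apply (measurableSet_singleton x)]
  have h1 : volume ({x} ∩ Ioc (0:ℝ) 1) = 0 :=
    le_antisymm (le_trans (measure_mono Set.inter_subset_left) (by simp)) zero_le
  have h2 : volume ({x} ∩ Ioc M (M+1)) = 0 :=
    le_antisymm (le_trans (measure_mono Set.inter_subset_left) (by simp)) zero_le
  rw [h1, h2]; simp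

lemma nu_compl_null (hM : 2 ≤ M) : nu δ M (Ioc (0:ℝ) 1 ∪ Ioc M (M+1))ᶜ = 0 := by
  rw [nu_apply (measurableSet_Ioc.union measurableSet_Ioc).compl]
  have h1 : (Ioc (0:ℝ) 1 ∪ Ioc M (M+1))ᶜ ∩ Ioc (0:ℝ) 1 = ∅ := by
    rw [Set.eq_empty_iff_forall_notMem]; rintro b ⟨hc, hb⟩; exact hc (Or.inl hb)
  have h2 : (Ioc (0:ℝ) 1 ∪ Ioc M (M+1))ᶜ ∩ Ioc M (M+1) = ∅ := by
    rw [Set.eq_empty_iff_forall_notMem]; rintro b ⟨hc, hb⟩; exact hc (Or.inr hb)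
  rw [h1, h2]; simp

lemma ae_mem (hM : 2 ≤ M) : ∀ᵐ b ∂(nu δ M), b ∈ Ioc (0:ℝ) 1 ∪ Ioc M (M+1) := by
  rw [MeasureTheory.ae_iff]
  convert nu_compl_null hM using 2
  rfl

lemma integrable_of_bdd (hM : 2 ≤ M) (hδ0 : 0 ≤ δ) (hδ1 : δ ≤ 1)
    {f : ℝ → ℝ} (hf : Measurable f) (C : ℝ)
    (hC : ∀ b ∈ Ioc (0:ℝ) 1 ∪ Ioc M (M+1), |f b| ≤ C) : Integrable f (nu δ M) := by
  haveI := nu_prob (M := M) hδ0 hδ1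
  refine Integrable.mono' (integrable_const C) hf.aestronglyMeasurable ?_
  filter_upwards [ae_mem hM] with b hb using hC b hb

lemma cdf_one (hδ1 : δ ≤ 1) (hM : 2 ≤ M) : ((nu δ M) (Iic 1)).toReal = 1 - δ := by
  rw [nu_apply measurableSet_Iic]
  have h1 : Iic (1:ℝ) ∩ Ioc 0 1 = Ioc 0 1 :=
    Set.inter_eq_self_of_subset_right (fun b hb => hb.2)
  have h2 : Iic (1:ℝ) ∩ Ioc M (M+1) = ∅ := by
    ext b; simp only [mem_inter_iff, mem_Iic, mem_Ioc, mem_empty_iff_false, iff_false]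
    rintro ⟨h1, h2, h3⟩; linarith
  rw [h1, h2, Real.volume_Ioc]
  norm_num
  linarith

lemma cdf_lt_one (hδ0 : 0 < δ) (hδ1 : δ ≤ 1) (hM : 2 ≤ M) {y : ℝ} (hy : y < M + 1) :
    ((nu δ M) (Iic y)).toReal < 1 := by
  have key : (nu δ M) (Iic y) ≤ ENNReal.ofReal (1 - δ + δ * max (y - M) 0) := by
    rw [nu_apply measurableSet_Iic]
    have h1 : volume (Iic y ∩ Ioc (0:ℝ) 1) ≤ 1 := by
      calc volume (Iic y ∩ Ioc (0:ℝ) 1) ≤ volume (Ioc (0:ℝ) 1) :=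
            measure_mono Set.inter_subset_right
        _ = 1 := by rw [Real.volume_Ioc]; norm_num
    have h2 : volume (Iic y ∩ Ioc M (M+1)) ≤ ENNReal.ofReal (max (y - M) 0) := by
      calc volume (Iic y ∩ Ioc M (M+1)) ≤ volume (Ioc M y) := by
            refine measure_mono ?_
            rintro b ⟨hb1, hb2, hb3⟩; exact ⟨hb2, hb1⟩
        _ = ENNReal.ofReal (y - M) := Real.volume_Ioc
        _ ≤ ENNReal.ofReal (max (y - M) 0) := ENNReal.ofReal_le_ofReal (le_max_left _ _)
    calc ENNReal.ofReal (1 - δ) * volume (Iic y ∩ Ioc (0:ℝ) 1)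
        + ENNReal.ofReal δ * volume (Iic y ∩ Ioc M (M+1))
        ≤ ENNReal.ofReal (1 - δ) * 1 + ENNReal.ofReal δ * ENNReal.ofReal (max (y - M) 0) := by
          gcongr
      _ = ENNReal.ofReal (1 - δ + δ * max (y - M) 0) := by
          rw [mul_one, ← ENNReal.ofReal_mul hδ0.le,
            ← ENNReal.ofReal_add (by linarith) (by positivity)]
  have hmax : max (y - M) 0 < 1 := by
    apply max_lt (by linarith) one_pos
  have h2 : (nu δ M) (Iic y) ≠ ⊤ := by
    refine ne_top_of_le_ne_top ?_ key; exact ENNReal.ofReal_ne_top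
  calc ((nu δ M) (Iic y)).toReal ≤ 1 - δ + δ * max (y - M) 0 := by
        refine ENNReal.toReal_le_of_le_ofReal (by nlinarith [le_max_right (y - M) (0:ℝ)]) key
    _ < 1 := by nlinarith
 
lemma cdf_Mp1 (hδ0 : 0 ≤ δ) (hδ1 : δ ≤ 1) (hM : 2 ≤ M) :
    ((nu δ M) (Iic (M+1))).toReal = 1 := by
  rw [nu_apply measurableSet_Iic]
  have h1 : Iic (M+1) ∩ Ioc (0:ℝ) 1 = Ioc 0 1 :=
    Set.inter_eq_self_of_subset_right (fun b hb => le_trans hb.2 (by linarith))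
  have h2 : Iic (M+1) ∩ Ioc M (M+1) = Ioc M (M+1) :=
    Set.inter_eq_self_of_subset_right (fun b hb => hb.2)
  rw [h1, h2, Real.volume_Ioc, Real.volume_Ioc]
  norm_num
  rw [← ENNReal.ofReal_add (by linarith) hδ0]
  norm_num

lemma cdf_zero_of_neg (hM : 0 ≤ M) {y : ℝ} (hy : y < 0) : (nu δ M) (Iic y) = 0 := by
  rw [nu_apply measurableSet_Iic]
  have h1 : Iic y ∩ Ioc (0:ℝ) 1 = ∅ := by
    ext b; simp only [mem_inter_iff, mem_Iic, mem_Ioc, mem_empty_iff_false, iff_false]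
    rintro ⟨h1, h2, h3⟩; linarith
  have h2 : Iic y ∩ Ioc M (M+1) = ∅ := by
    ext b; simp only [mem_inter_iff, mem_Iic, mem_Ioc, mem_empty_iff_false, iff_false]
    rintro ⟨h1, h2, h3⟩; linarith
  rw [h1, h2]; simp

lemma quant_le_one (hδ0 : 0 < δ) (hδ1 : δ ≤ 1) (hM : 2 ≤ M) {x : ℝ} (hx : x ≤ 1 - δ) :
    quantileFn (nu δ M) x ≤ 1 := by
  unfold quantileFn
  by_cases hx0 : 0 < x
  · refine csInf_le ?_ ?_
    · refine ⟨0, fun y hy => ?_⟩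
      by_contra hy0
      push_neg at hy0
      rw [Set.mem_setOf_eq, cdf_zero_of_neg (by linarith) hy0] at hy
      simp at hy
      linarith
    · rw [Set.mem_setOf_eq, cdf_one hδ1 hM]; exact hx
  · push_neg at hx0
    have : { y : ℝ | x ≤ ((nu δ M) (Set.Iic y)).toReal } = Set.univ := by
      ext y; simp only [Set.mem_setOf_eq, Set.mem_univ, iff_true]
      exact le_trans hx0 ENNReal.toReal_nonneg
    rw [this]
    rw [csInf_of_not_bddBelow, Real.sInf_empty]
    · norm_num
    · rintro ⟨a, ha⟩
      have := ha (Set.mem_univ (a - 1))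
      linarith

lemma quant_ge (hδ0 : 0 < δ) (hδ1 : δ ≤ 1) (hM : 2 ≤ M) :
    M + 1 ≤ quantileFn (nu δ M) 1 := by
  unfold quantileFn
  refine le_csInf ⟨M + 1, ?_⟩ ?_
  · rw [Set.mem_setOf_eq, cdf_Mp1 hδ0.le hδ1 hM]
  · intro y hy
    rw [Set.mem_setOf_eq] at hy
    by_contra h
    push_neg at h
    have := cdf_lt_one hδ0 hδ1 hM h
    linarith

lemma quant_gt_one (hδ0 : 0 ≤ δ) (hδ1 : δ ≤ 1) {x : ℝ} (hx : 1 < x) :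
    quantileFn (nu δ M) x = 0 := by
  haveI := nu_prob (M := M) hδ0 hδ1
  unfold quantileFn
  have : { y : ℝ | x ≤ ((nu δ M) (Set.Iic y)).toReal } = ∅ := by
    ext y; simp only [Set.mem_setOf_eq, Set.mem_empty_iff_false, iff_false]
    push_neg
    calc ((nu δ M) (Set.Iic y)).toReal ≤ ((nu δ M) Set.univ).toReal := by
          refine ENNReal.toReal_mono (by simp) (measure_mono (Set.subset_univ _))
      _ = 1 := by simp
      _ < x := hx
  rw [this, Real.sInf_empty]

/-- The indicator-style gain function. -/
noncomputable def g (p b : ℝ) : ℝ := if 2 ≤ p ∧ p ≤ b then b - 2 else 0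

lemma g_measurable (p : ℝ) : Measurable (g p) := by
  unfold g
  refine Measurable.ite ?_ (measurable_id.sub measurable_const) measurable_const
  have : { b : ℝ | 2 ≤ p ∧ p ≤ b } = { b : ℝ | 2 ≤ p } ∩ Set.Ici p := by
    ext b; simp [Set.mem_setOf_eq, Set.mem_Ici]
  rw [this]
  exact (MeasurableSet.const _).inter measurableSet_Ici

lemma g_integrable (hδ0 : 0 ≤ δ) (hδ1 : δ ≤ 1) (hM : 2 ≤ M) (p : ℝ) :
    Integrable (g p) (nu δ M) := by
  refine integrable_of_bdd hM hδ0 hδ1 (g_measurable p) (M + 1) ?_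
  rintro b hb
  unfold g
  split_ifs with h
  · rcases hb with hb | hb
    · exfalso; rcases hb with ⟨_, hb1⟩; rcases h with ⟨h1, h2⟩; linarith
    · rw [abs_of_nonneg (by rcases h with ⟨h1, h2⟩; linarith)]
      rcases hb with ⟨_, hb2⟩; linarith
  · simp; linarith

lemma welfare_eq (hδ0 : 0 ≤ δ) (hδ1 : δ ≤ 1) (hM : 2 ≤ M) (p : ℝ) :
    welfare (Measure.dirac 2) (nu δ M) p = 2 + ∫ b, g p b ∂(nu δ M) := by
  haveI := nu_prob (M := M) hδ0 hδ1
  have hfm : Measurable (fun z : ℝ × ℝ => z.1 + if z.1 ≤ p ∧ p ≤ z.2 then z.2 - z.1 else 0) := by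
    refine measurable_fst.add ?_
    refine Measurable.ite ?_ (measurable_snd.sub measurable_fst) measurable_const
    exact (measurableSet_le measurable_fst measurable_const).inter
      (measurableSet_le measurable_const measurable_snd)
  rw [welfare, Measure.dirac_prod,
    integral_map measurable_prodMk_left.aemeasurable hfm.aestronglyMeasurable]
  simp only [Function.comp]
  have heq : (∫ x : ℝ, ((2:ℝ) + if (2:ℝ) ≤ p ∧ p ≤ x then x - 2 else 0) ∂(nu δ M))
      = ∫ x, ((fun _ : ℝ => (2:ℝ)) x + g p x) ∂(nu δ M) := rfl
  rw [heq, integral_add (integrable_const 2) (g_integrable hδ0 hδ1 hM p), integral_const]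
  simp [measure_univ]

lemma welfare_nonneg (hδ0 : 0 ≤ δ) (hδ1 : δ ≤ 1) (hM : 2 ≤ M) (p : ℝ) :
    0 ≤ welfare (Measure.dirac 2) (nu δ M) p := by
  rw [welfare_eq hδ0 hδ1 hM p]
  have : 0 ≤ ∫ b, g p b ∂(nu δ M) := by
    refine integral_nonneg fun b => ?_
    simp only [Pi.zero_apply]
    unfold g; split_ifs with h
    · rcases h with ⟨h1, h2⟩; linarith
    · exact le_refl 0
  linarith

lemma welfare_le (hδ0 : 0 ≤ δ) (hδ1 : δ ≤ 1) (hM : 2 ≤ M) (p : ℝ) :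
    welfare (Measure.dirac 2) (nu δ M) p ≤ 2 + δ * M := by
  haveI := nu_prob (M := M) hδ0 hδ1
  rw [welfare_eq hδ0 hδ1 hM p]
  have hnuIci : (nu δ M) (Set.Ici 2) = ENNReal.ofReal δ := by
    rw [nu_apply measurableSet_Ici]
    have h1 : Set.Ici (2:ℝ) ∩ Ioc 0 1 = ∅ := by
      ext b; simp only [mem_inter_iff, mem_Ici, mem_Ioc, mem_empty_iff_false, iff_false]
      rintro ⟨h1, h2, h3⟩; linarith
    have h2 : Set.Ici (2:ℝ) ∩ Ioc M (M+1) = Ioc M (M+1) :=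
      Set.inter_eq_self_of_subset_right (fun b hb => by
        simp only [mem_Ici]; rcases hb with ⟨hb1, _⟩; linarith)
    rw [h1, h2, Real.volume_Ioc]
    norm_num
  have key : ∫ b, g p b ∂(nu δ M)
      ≤ ∫ b, Set.indicator (Set.Ici 2) (fun _ => M - 1) b ∂(nu δ M) := by
    refine integral_mono_ae (g_integrable hδ0 hδ1 hM p)
      ((integrable_const (M - 1)).indicator measurableSet_Ici) ?_
    filter_upwards [ae_mem hM] with b hb
    unfold g
    split_ifs with h
    · rcases h with ⟨h1, h2⟩
      have hb2 : b ∈ Ioc M (M+1) := by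
        rcases hb with hb | hb
        · exfalso; rcases hb with ⟨_, hb1⟩; linarith
        · exact hb
      rw [Set.indicator_of_mem (by simp only [mem_Ici]; linarith)]
      rcases hb2 with ⟨_, hb2⟩; linarith
    · rcases Classical.em (b ∈ Set.Ici (2:ℝ)) with hmem | hmem
      · rw [Set.indicator_of_mem hmem]; linarith
      · rw [Set.indicator_of_notMem hmem]
  have hind : ∫ b, Set.indicator (Set.Ici 2) (fun _ : ℝ => M - 1) b ∂(nu δ M)
      = δ * (M - 1) := by
    rw [integral_indicator_const (M - 1) measurableSet_Ici, measureReal_def, hnuIci,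
      ENNReal.toReal_ofReal hδ0, smul_eq_mul]
  nlinarith [key, hind]

lemma welfare_eq_two_of_lt (hδ0 : 0 ≤ δ) (hδ1 : δ ≤ 1) (hM : 2 ≤ M) {p : ℝ} (hp : p < 2) :
    welfare (Measure.dirac 2) (nu δ M) p = 2 := by
  rw [welfare_eq hδ0 hδ1 hM p]
  have : ∀ b, g p b = 0 := by
    intro b; unfold g; split_ifs with h
    · exfalso; rcases h with ⟨h1, _⟩; linarith
    · rfl
  simp [this]

lemma welfare_eq_two_of_ge (hδ0 : 0 ≤ δ) (hδ1 : δ ≤ 1) (hM : 2 ≤ M) {p : ℝ}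
    (hp : M + 1 ≤ p) : welfare (Measure.dirac 2) (nu δ M) p = 2 := by
  rw [welfare_eq hδ0 hδ1 hM p]
  have hzero : ∫ b, g p b ∂(nu δ M) = 0 := by
    refine integral_eq_zero_of_ae ?_
    have hsing : ∀ᵐ b ∂(nu δ M), b ≠ M + 1 := by
      rw [MeasureTheory.ae_iff]
      convert nu_singleton (δ := δ) (M := M) (M+1) using 2
      ext b; simp
    filter_upwards [ae_mem hM, hsing] with b hb hbne
    unfold g
    split_ifs with h
    · exfalso
      rcases h with ⟨h1, h2⟩
      rcases hb with hb | hb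
      · rcases hb with ⟨_, hb1⟩; linarith
      · rcases hb with ⟨_, hb2⟩
        have : b = M + 1 := le_antisymm hb2 (by linarith)
        exact hbne this
    · rfl
  rw [hzero]; ring

lemma max_integrable (hδ0 : 0 ≤ δ) (hδ1 : δ ≤ 1) (hM : 2 ≤ M) :
    Integrable (fun b => max 2 b) (nu δ M) := by
  refine integrable_of_bdd hM hδ0 hδ1 (measurable_const.max measurable_id) (M + 2) ?_
  rintro b hb
  rw [abs_of_nonneg (le_trans (by norm_num) (le_max_left 2 b))]
  rcases hb with hb | hb
  · rcases hb with ⟨_, hb1⟩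
    refine max_le (by linarith) (by linarith)
  · rcases hb with ⟨_, hb2⟩
    refine max_le (by linarith) (by linarith)

lemma opt_eq (hδ0 : 0 ≤ δ) (hδ1 : δ ≤ 1) :
    optWelfare (Measure.dirac 2) (nu δ M) = ∫ b, max 2 b ∂(nu δ M) := by
  haveI := nu_prob (M := M) hδ0 hδ1
  have hfm : Measurable (fun z : ℝ × ℝ => max z.1 z.2) :=
    measurable_fst.max measurable_snd
  rw [optWelfare, Measure.dirac_prod,
    integral_map measurable_prodMk_left.aemeasurable hfm.aestronglyMeasurable]

lemma opt_ge_two (hδ0 : 0 ≤ δ) (hδ1 : δ ≤ 1) (hM : 2 ≤ M) :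
    2 ≤ optWelfare (Measure.dirac 2) (nu δ M) := by
  haveI := nu_prob (M := M) hδ0 hδ1
  rw [opt_eq hδ0 hδ1]
  calc (2:ℝ) = ∫ _b, (2:ℝ) ∂(nu δ M) := by rw [integral_const]; simp
    _ ≤ ∫ b, max 2 b ∂(nu δ M) :=
      integral_mono (integrable_const 2) (max_integrable hδ0 hδ1 hM)
        (fun b => le_max_left 2 b)

lemma opt_ge_dM (hδ0 : 0 ≤ δ) (hδ1 : δ ≤ 1) (hM : 2 ≤ M) :
    δ * M ≤ optWelfare (Measure.dirac 2) (nu δ M) := by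
  haveI := nu_prob (M := M) hδ0 hδ1
  rw [opt_eq hδ0 hδ1]
  have hnu : (nu δ M) (Ioc M (M+1)) = ENNReal.ofReal δ := by
    rw [nu_apply measurableSet_Ioc]
    have h1 : Ioc M (M+1) ∩ Ioc (0:ℝ) 1 = ∅ := by
      ext b; simp only [mem_inter_iff, mem_Ioc, mem_empty_iff_false, iff_false]
      rintro ⟨⟨h1, _⟩, _, h3⟩; linarith
    have h2 : Ioc M (M+1) ∩ Ioc M (M+1) = Ioc M (M+1) := Set.inter_self _
    rw [h1, h2, Real.volume_Ioc]
    norm_num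
  calc δ * M = ∫ b, Set.indicator (Ioc M (M+1)) (fun _ => M) b ∂(nu δ M) := by
        rw [integral_indicator_const M measurableSet_Ioc, measureReal_def, hnu,
          ENNReal.toReal_ofReal hδ0, smul_eq_mul]
    _ ≤ ∫ b, max 2 b ∂(nu δ M) := by
        refine integral_mono ((integrable_const M).indicator measurableSet_Ioc)
          (max_integrable hδ0 hδ1 hM) (fun b => ?_)
        rcases Classical.em (b ∈ Ioc M (M+1)) with hmem | hmem
        · rw [Set.indicator_of_mem hmem]
          rcases hmem with ⟨hb1, _⟩
          exact le_trans hb1.le (le_max_right 2 b)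
        · rw [Set.indicator_of_notMem hmem]
          exact le_trans (by norm_num) (le_max_left 2 b)

end Stmt10Aux

/-- No quantile mechanism over the buyer's distribution achieves a constant fraction of
the optimal welfare: for every `ε > 0` and every quantile distribution `Q` on `[0,1]`
there is an instance (with atomless buyer distribution, `0 < OPT < ∞`) on which the
mechanism posting `F_B⁻¹(x)`, `x ~ Q`, gets at most `ε · OPT`. -/
theorem stmt_10 (ε : ℝ) (hε : 0 < ε) (Q : Measure ℝ) [IsProbabilityMeasure Q]
    (hQ : Q (Set.Icc (0:ℝ) 1)ᶜ = 0) :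
    ∃ μ ν : Measure ℝ, IsProbabilityMeasure μ ∧ IsProbabilityMeasure ν ∧
      μ (Set.Iio 0) = 0 ∧ ν (Set.Iio 0) = 0 ∧
      (∀ x : ℝ, ν {x} = 0) ∧
      Integrable (fun z : ℝ × ℝ => max z.1 z.2) (μ.prod ν) ∧
      0 < optWelfare μ ν ∧
      (∫ x, welfare μ ν (quantileFn ν x) ∂Q) ≤ ε * optWelfare μ ν := by
  classical
  -- Step 1: choose δ ∈ (0, 1] with Q (Ioo (1-δ) 1) small.
  obtain ⟨δ, hδ0, hδ1, hδQ⟩ :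
      ∃ δ : ℝ, 0 < δ ∧ δ ≤ 1 ∧ (Q (Set.Ioo (1 - δ) 1)).toReal ≤ ε / 4 := by
    have hanti : Antitone (fun n : ℕ => Set.Ioo (1 - 1/((n:ℝ)+1)) 1) := by
      intro a b hab
      refine Set.Ioo_subset_Ioo ?_ le_rfl
      have hcast : (a:ℝ) + 1 ≤ (b:ℝ) + 1 := by
        have : (a:ℝ) ≤ (b:ℝ) := Nat.cast_le.mpr hab
        linarith
      have h1 : 1/((b:ℝ)+1) ≤ 1/((a:ℝ)+1) :=
        one_div_le_one_div_of_le (by positivity) hcast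
      linarith
    have htend : Filter.Tendsto (fun n : ℕ => Q (Set.Ioo (1 - 1/((n:ℝ)+1)) 1)) Filter.atTop
        (nhds (Q (⋂ n : ℕ, Set.Ioo (1 - 1/((n:ℝ)+1)) 1))) :=
      tendsto_measure_iInter_atTop
        (fun n => measurableSet_Ioo.nullMeasurableSet) hanti ⟨0, measure_ne_top _ _⟩
    have hempty : (⋂ n : ℕ, Set.Ioo (1 - 1/((n:ℝ)+1)) 1) = ∅ := by
      ext x
      simp only [Set.mem_iInter, Set.mem_Ioo, Set.mem_empty_iff_false, iff_false]
      intro h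
      have hx1 : x < 1 := (h 0).2
      obtain ⟨n, hn⟩ := exists_nat_one_div_lt (show (0:ℝ) < 1 - x by linarith)
      have := (h n).1
      have : 1 - 1/((n:ℝ)+1) < x := this
      linarith
    rw [hempty, measure_empty] at htend
    have hev : ∀ᶠ n : ℕ in Filter.atTop,
        Q (Set.Ioo (1 - 1/((n:ℝ)+1)) 1) < ENNReal.ofReal (ε/4) := by
      refine htend.eventually_lt_const ?_
      simp only [ENNReal.ofReal_pos]
      positivity
    obtain ⟨n, hn⟩ := hev.exists
    refine ⟨1/((n:ℝ)+1), by positivity, ?_, ?_⟩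
    · rw [div_le_one (by positivity)]
      have : (0:ℝ) ≤ (n:ℝ) := Nat.cast_nonneg n
      linarith
    · exact ENNReal.toReal_le_of_le_ofReal (by positivity) hn.le
  -- Step 2: choose M.
  set M : ℝ := 2 + 4/(ε*δ) with hMdef
  have hM : 2 ≤ M := by
    have : (0:ℝ) < 4/(ε*δ) := by positivity
    simp only [hMdef]; linarith
  have hdM : 4/ε ≤ δ * M := by
    have hne : ε * δ ≠ 0 := by positivity
    have h1 : δ * (4/(ε*δ)) = 4/ε := by field_simp
    have : δ * M = 2*δ + 4/ε := by rw [hMdef]; rw [mul_add, h1]; ring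
    rw [this]; linarith
  haveI hnup := Stmt10Aux.nu_prob (M := M) hδ0.le hδ1
  have hfm : Measurable (fun z : ℝ × ℝ => max z.1 z.2) :=
    measurable_fst.max measurable_snd
  refine ⟨Measure.dirac 2, Stmt10Aux.nu δ M, inferInstance, hnup, ?_,
    Stmt10Aux.nu_Iio (by linarith), Stmt10Aux.nu_singleton, ?_, ?_, ?_⟩
  · rw [Measure.dirac_apply' _ measurableSet_Iio]
    simp
  · rw [Measure.dirac_prod,
      integrable_map_measure hfm.aestronglyMeasurable measurable_prodMk_left.aemeasurable]
    exact Stmt10Aux.max_integrable hδ0.le hδ1 hM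
  · exact lt_of_lt_of_le (by norm_num) (Stmt10Aux.opt_ge_two hδ0.le hδ1 hM)
  · set OPT := optWelfare (Measure.dirac 2) (Stmt10Aux.nu δ M) with hOPTdef
    have hOPT2 := Stmt10Aux.opt_ge_two hδ0.le hδ1 hM
    have hOPTdM := Stmt10Aux.opt_ge_dM hδ0.le hδ1 hM
    have hψint : Integrable
        (fun x : ℝ => 2 + Set.indicator (Set.Ioo (1-δ) 1) (fun _ => δ * M) x) Q :=
      (integrable_const 2).add ((integrable_const _).indicator measurableSet_Ioo)
    have hφψ : ∀ x, welfare (Measure.dirac 2) (Stmt10Aux.nu δ M)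
        (quantileFn (Stmt10Aux.nu δ M) x)
        ≤ 2 + Set.indicator (Set.Ioo (1-δ) 1) (fun _ => δ * M) x := by
      intro x
      rcases Classical.em (x ∈ Set.Ioo (1-δ) 1) with hmem | hmem
      · rw [Set.indicator_of_mem hmem]
        exact Stmt10Aux.welfare_le hδ0.le hδ1 hM _
      · rw [Set.indicator_of_notMem hmem]
        simp only [Set.mem_Ioo, not_and, not_lt] at hmem
        by_cases hx : x ≤ 1 - δ
        · rw [Stmt10Aux.welfare_eq_two_of_lt hδ0.le hδ1 hM
            (lt_of_le_of_lt (Stmt10Aux.quant_le_one hδ0 hδ1 hM hx) (by norm_num))]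
          norm_num
        · push_neg at hx
          have h1x : 1 ≤ x := hmem hx
          rcases eq_or_lt_of_le h1x with heq | hlt
          · rw [← heq, Stmt10Aux.welfare_eq_two_of_ge hδ0.le hδ1 hM
              (Stmt10Aux.quant_ge hδ0 hδ1 hM)]
            norm_num
          · rw [Stmt10Aux.welfare_eq_two_of_lt hδ0.le hδ1 hM
              (show quantileFn (Stmt10Aux.nu δ M) x < 2 by
                rw [Stmt10Aux.quant_gt_one hδ0.le hδ1 hlt]; norm_num)]
            norm_num
    have hint : (∫ x, welfare (Measure.dirac 2) (Stmt10Aux.nu δ M)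
        (quantileFn (Stmt10Aux.nu δ M) x) ∂Q)
        ≤ ∫ x, (2 + Set.indicator (Set.Ioo (1-δ) 1) (fun _ => δ * M) x) ∂Q :=
      integral_mono_of_nonneg
        (Filter.Eventually.of_forall fun x => Stmt10Aux.welfare_nonneg hδ0.le hδ1 hM _)
        hψint (Filter.Eventually.of_forall hφψ)
    have hψval : ∫ x, (2 + Set.indicator (Set.Ioo (1-δ) 1) (fun _ => δ * M) x) ∂Q
        = 2 + (Q (Set.Ioo (1-δ) 1)).toReal * (δ * M) := by
      rw [integral_add (integrable_const 2)
        ((integrable_const _).indicator measurableSet_Ioo),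
        integral_const, integral_indicator_const _ measurableSet_Ioo]
      simp [smul_eq_mul]
      exact Or.inl rfl
    set q : ℝ := (Q (Set.Ioo (1-δ) 1)).toReal with hqdef
    have hq0 : (0:ℝ) ≤ q := ENNReal.toReal_nonneg
    have hdM0 : (0:ℝ) ≤ δ * M := by positivity
    have h1 : q * (δ * M) ≤ (ε/4) * OPT :=
      mul_le_mul hδQ hOPTdM hdM0 (by positivity)
    have h2 : 2 ≤ (ε/2) * OPT := by
      have ha : ε/2 * (4/ε) ≤ ε/2 * OPT :=
        mul_le_mul_of_nonneg_left (le_trans hdM hOPTdM) (by positivity)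
      have hb : ε/2 * (4/ε) = 2 := by field_simp; ring
      linarith
    have hOPT0 : (0:ℝ) ≤ OPT := by linarith
    calc (∫ x, welfare (Measure.dirac 2) (Stmt10Aux.nu δ M)
          (quantileFn (Stmt10Aux.nu δ M) x) ∂Q)
        ≤ 2 + q * (δ * M) := by rw [← hψval]; exact hint
      _ ≤ (ε/2) * OPT + (ε/4) * OPT := by linarith
      _ ≤ ε * OPT := by nlinarith
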